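/- A group G is Malcev nilpotent of class n (as a semigroup) if and only if G is nilpotent of class n as a group. -/

import Mathlib

/-- The Malcev sequences: `(malcevLR x y z n).1 = λ_n`, `(malcevLR x y z n).2 = ρ_n`,
with `λ_0 = x`, `ρ_0 = y`, `λ_{k+1} = λ_k z_k ρ_k`, `ρ_{k+1} = ρ_k z_k λ_k`. -/
def malcevLR {α : Type*} [Mul α] (x y : α) (z : ℕ → α) : ℕ → α × α
  | 0 => (x, y)
  | n+1 => ((malcevLR x y z n).1 * z n * (malcevLR x y z n).2,
            (malcevLR x y z n).2 * z n * (malcevLR x y z n).1)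

/-- A semigroup is Malcev nilpotent of class at most `n` if `λ_n = ρ_n` identically,
with the interlacing elements taken from `S¹ = WithOne S`. -/
def MalcevClassLe (S : Type*) [Semigroup S] (n : ℕ) : Prop :=
  ∀ (a b : S) (c : ℕ → WithOne S),
    (malcevLR (a : WithOne S) (b : WithOne S) c n).1 =
    (malcevLR (a : WithOne S) (b : WithOne S) c n).2

/-- Malcev nilpotency. -/
def MalcevNilpotent (S : Type*) [Semigroup S] : Prop :=
  ∃ n, 1 ≤ n ∧ MalcevClassLe S n

/-- A (two-sided, nonempty) ideal of a semigroup. -/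
def IsIdeal {S : Type*} [Mul S] (I : Set S) : Prop :=
  I.Nonempty ∧ ∀ s x, x ∈ I → s * x ∈ I ∧ x * s ∈ I

/-- The Rees congruence associated to an ideal: identify all elements of `I`. -/
def reesCon {S : Type*} [Semigroup S] (I : Set S) (hI : IsIdeal I) : Con S where
  r x y := x = y ∨ (x ∈ I ∧ y ∈ I)
  iseqv := ⟨fun _ => Or.inl rfl,
    fun h => h.elim (fun h => Or.inl h.symm) (fun h => Or.inr ⟨h.2, h.1⟩),
    fun h₁ h₂ => by
      rcases h₁ with h₁ | h₁
      · rwa [h₁]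
      · rcases h₂ with h₂ | h₂
        · exact Or.inr ⟨h₁.1, h₂ ▸ h₁.2⟩
        · exact Or.inr ⟨h₁.1, h₂.2⟩⟩
  mul' := by
    intro a b c d h₁ h₂
    rcases h₁ with h₁ | h₁
    · rcases h₂ with h₂ | h₂
      · exact Or.inl (by rw [h₁, h₂])
      · exact Or.inr ⟨(hI.2 a c h₂.1).1, h₁ ▸ (hI.2 b d h₂.2).1⟩
    · exact Or.inr ⟨(hI.2 c a h₁.1).2, (hI.2 d b h₁.2).2⟩

/-- `S` is minimal non-nilpotent: not Malcev nilpotent, but every proper subsemigroup and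
every proper Rees factor semigroup is Malcev nilpotent. -/
def MinimalNonNilpotent (S : Type*) [Semigroup S] : Prop :=
  ¬ MalcevNilpotent S ∧
  (∀ T : Subsemigroup S, T ≠ ⊤ → MalcevNilpotent T) ∧
  (∀ (I : Set S) (hI : IsIdeal I), I.Nontrivial →
    MalcevNilpotent (reesCon I hI).Quotient)

/-- `θ` together with the injective family `E g i j ↔ (g; i, j)` realizes a copy of the
inverse Rees matrix semigroup `M⁰(G, n, n; I_n)` as an ideal of `S`. -/
def IsReesIdeal {S : Type*} [Semigroup S] {G : Type*} [Group G] {n : ℕ}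
    (θ : S) (E : G → Fin n → Fin n → S) : Prop :=
  (∀ s : S, s * θ = θ ∧ θ * s = θ) ∧
  Function.Injective (fun p : G × Fin n × Fin n => E p.1 p.2.1 p.2.2) ∧
  (θ ∉ Set.range fun p : G × Fin n × Fin n => E p.1 p.2.1 p.2.2) ∧
  (∀ g h i j k l, E g i j * E h k l = if j = k then E (g * h) i l else θ) ∧
  (∀ (s : S) g i j,
    (s * E g i j = θ ∨ ∃ g' i' j', s * E g i j = E g' i' j') ∧
    (E g i j * s = θ ∨ ∃ g' i' j', E g i j * s = E g' i' j'))

/-- The underlying set of the Rees ideal `M = E(G × n × n) ∪ {θ}`. -/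
def reesIdealSet {S : Type*} {G : Type*} {n : ℕ} (θ : S) (E : G → Fin n → Fin n → S) :
    Set S :=
  (Set.range fun p : G × Fin n × Fin n => E p.1 p.2.1 p.2.2) ∪ {θ}


section MalcevGroupAux
open scoped commutatorElement
variable {G : Type*} [Group G]

/-- The retraction `WithOne G →* G` sending the adjoined one to the group identity. -/
noncomputable def phiG (G : Type*) [Group G] : WithOne G →* G := WithOne.lift (MulHom.id G)

lemma coe_mul_phi (g : G) (x : WithOne G) :
    (g : WithOne G) * x = ((g * phiG G x : G) : WithOne G) := by
  induction x using WithOne.cases_on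
  · simp [phiG]
  · simp [phiG]

lemma phi_mul_coe (x : WithOne G) (g : G) :
    x * (g : WithOne G) = ((phiG G x * g : G) : WithOne G) := by
  induction x using WithOne.cases_on
  · simp [phiG]
  · simp [phiG]

lemma malcev_coe (a b : G) (c : ℕ → WithOne G) (k : ℕ) :
    malcevLR (a : WithOne G) (b : WithOne G) c k =
      ((((malcevLR a b (fun i => phiG G (c i)) k).1 : G) : WithOne G),
        (((malcevLR a b (fun i => phiG G (c i)) k).2 : G) : WithOne G)) := by
  induction k with
  | zero => rfl
  | succ k ih =>
    simp only [malcevLR, ih, phi_mul_coe, coe_mul_phi, WithOne.lift_coe]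
    rfl

lemma malcevClassLe_iff_group (n : ℕ) :
    MalcevClassLe G n ↔
      ∀ (a b : G) (c : ℕ → G), (malcevLR a b c n).1 = (malcevLR a b c n).2 := by
  constructor
  · intro h a b c
    have := h a b (fun i => (c i : WithOne G))
    rw [malcev_coe] at this
    simp only at this
    rw [WithOne.coe_inj] at this
    have hc : (fun i => phiG G ((c i : WithOne G))) = c := by
      funext i; simp [phiG]
    rwa [hc] at this
  · intro h a b c
    rw [malcev_coe a b c n]
    exact congrArg _ (h a b _)

lemma w_succ (a b : G) (c : ℕ → G) (k : ℕ) :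
    (malcevLR a b c (k+1)).1 * ((malcevLR a b c (k+1)).2)⁻¹ =
      ⁅(malcevLR a b c k).1 * ((malcevLR a b c k).2)⁻¹, (malcevLR a b c k).2 * c k⁆ := by
  simp only [malcevLR, commutatorElement_def]
  group

lemma w_mem (a b : G) (c : ℕ → G) (k : ℕ) :
    (malcevLR a b c k).1 * ((malcevLR a b c k).2)⁻¹ ∈ (⊤ : Subgroup G).lowerCentralSeries k := by
  induction k with
  | zero => exact Subgroup.mem_top _
  | succ k ih =>
    rw [w_succ]
    exact Subgroup.commutator_mem_commutator ih (Subgroup.mem_top _)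

/-- Left-normed iterated commutators `⁅…⁅x, g 0⁆, …, g (k-1)⁆`. -/
def iterComm (x : G) (g : ℕ → G) : ℕ → G
  | 0 => x
  | k+1 => ⁅iterComm x g k, g k⁆

/-- Simultaneous recursion producing `(λ_k, ρ_k, c_k)` with `c_k := ρ_k⁻¹ * g k`. -/
def auxSeq (x : G) (g : ℕ → G) : ℕ → G × G × G
  | 0 => (x, 1, 1⁻¹ * g 0)
  | k+1 =>
    let p := auxSeq x g k
    (p.1 * p.2.2 * p.2.1, p.2.1 * p.2.2 * p.1, (p.2.1 * p.2.2 * p.1)⁻¹ * g (k+1))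

lemma auxSeq_rc (x : G) (g : ℕ → G) (k : ℕ) :
    (auxSeq x g k).2.1 * (auxSeq x g k).2.2 = g k := by
  cases k <;> simp [auxSeq, mul_assoc]

lemma auxSeq_spec (x : G) (g : ℕ → G) (k : ℕ) :
    malcevLR x 1 (fun i => (auxSeq x g i).2.2) k = ((auxSeq x g k).1, (auxSeq x g k).2.1) := by
  induction k with
  | zero => rfl
  | succ k ih => simp only [malcevLR, ih, auxSeq]

lemma auxSeq_w (x : G) (g : ℕ → G) (k : ℕ) :
    (auxSeq x g k).1 * ((auxSeq x g k).2.1)⁻¹ = iterComm x g k := by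
  induction k with
  | zero => simp [auxSeq, iterComm]
  | succ k ih =>
    have h := w_succ x 1 (fun i => (auxSeq x g i).2.2) k
    rw [auxSeq_spec, auxSeq_spec] at h
    simp only [auxSeq] at h ⊢
    rw [h, iterComm, ← ih, auxSeq_rc]

lemma iterComm_shift (x y : G) (g : ℕ → G) (m : ℕ) :
    iterComm ⁅x, y⁆ g m =
      iterComm x (fun i => Nat.rec y (fun k _ => g k) i) (m+1) := by
  induction m with
  | zero => rfl
  | succ m ih => rw [iterComm, ih]; rfl

lemma iterComm_one_of_malcev {n : ℕ}
    (h : ∀ (a b : G) (c : ℕ → G), (malcevLR a b c n).1 = (malcevLR a b c n).2)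
    (x : G) (g : ℕ → G) : iterComm x g n = 1 := by
  rw [← auxSeq_w]
  have := h x 1 (fun i => (auxSeq x g i).2.2)
  rw [auxSeq_spec] at this
  simp only at this
  rw [this, mul_inv_cancel]

lemma mem_ucs_of_iterComm {m : ℕ} (x : G) (hx : ∀ g : ℕ → G, iterComm x g m = 1) :
    x ∈ Subgroup.upperCentralSeries G m := by
  induction m generalizing x with
  | zero =>
    have := hx (fun _ => 1)
    simp only [iterComm] at this
    simp only [this]; exact Subgroup.one_mem _
  | succ m ih =>
    rw [mem_upperCentralSeries_succ_iff]
    intro y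
    have : ⁅x, y⁆ ∈ Subgroup.upperCentralSeries G m := by
      apply ih
      intro g
      rw [iterComm_shift]
      exact hx _
    simpa [commutatorElement_def] using this

lemma key_iff (n : ℕ) : MalcevClassLe G n ↔ (⊤ : Subgroup G).lowerCentralSeries n = ⊥ := by
  rw [malcevClassLe_iff_group]
  constructor
  · intro h
    have htop : Subgroup.upperCentralSeries G n = ⊤ := by
      rw [eq_top_iff]
      intro x _
      exact mem_ucs_of_iterComm x (fun g => iterComm_one_of_malcev h x g)
    have : Group.IsNilpotent G := ⟨⟨n, htop⟩⟩
    exact lowerCentralSeries_eq_bot_iff_nilpotencyClass_le.mpr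
      (upperCentralSeries_eq_top_iff_nilpotencyClass_le.mp htop)
  · intro h a b c
    have := w_mem a b c n
    rw [h, Subgroup.mem_bot, mul_inv_eq_one] at this
    exact this

end MalcevGroupAux

/-- A group is Malcev nilpotent of class `n` as a semigroup iff it is nilpotent of class `n`
as a group. -/
theorem stmt_5 {G : Type*} [Group G] (n : ℕ) :
    (MalcevClassLe G n ∧ ∀ m < n, ¬ MalcevClassLe G m) ↔
      ((⊤ : Subgroup G).lowerCentralSeries n = ⊥ ∧ ∀ m < n, (⊤ : Subgroup G).lowerCentralSeries m ≠ ⊥) := by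
  constructor
  · rintro ⟨h1, h2⟩
    exact ⟨(key_iff n).mp h1, fun m hm he => h2 m hm ((key_iff m).mpr he)⟩
  · rintro ⟨h1, h2⟩
    exact ⟨(key_iff n).mpr h1, fun m hm hc => h2 m hm ((key_iff m).mp hc)⟩
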